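/- Suppose ‖x(j)‖ ≤ K for every j ∈ J, and let π(β,·) be the probability mass function on J with π(β,j) = w(β,j)/W(β). Then, under the product measure π(β,·)^{⊗L} on J^L (modeling L independent and identically distributed draws j̃_1, …, j̃_L), the probability that the coordinates are not pairwise distinct is at most binom(L,2) · exp(4 K ‖β‖) / |J|. -/

import Mathlib

open scoped RealInnerProductSpace BigOperators

open Finset

/-- The sum over functions identifying two fixed distinct coordinates is at most `C`,
when the pmf `q` is bounded by `C`. -/
lemma aux_pair_sum_le {J : Type*} [Fintype J] [DecidableEq J] {L : ℕ}
    (q : J → ℝ) (hq0 : ∀ j, 0 ≤ q j) (hq1 : ∑ j, q j = 1)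
    {C : ℝ} (hqC : ∀ j, q j ≤ C) {l l' : Fin L} (hne : l ≠ l') :
    ∑ v ∈ Finset.univ.filter (fun v : Fin L → J => v l = v l'), ∏ m, q (v m) ≤ C := by
  set t : J → Fin L → Finset J := fun j m => if m = l ∨ m = l' then {j} else Finset.univ
    with ht
  have hfib : ∀ j : J, (Finset.univ.filter (fun v : Fin L → J => v l = v l')).filter
      (fun v => v l = j) = Fintype.piFinset (t j) := by
    intro j
    ext v
    simp only [mem_filter, mem_univ, true_and, Fintype.mem_piFinset, ht]
    constructor
    · rintro ⟨h1, h2⟩ m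
      by_cases hm : m = l ∨ m = l'
      · rcases hm with rfl | rfl
        · simp [h2]
        · simp [← h1, h2]
      · simp [hm]
    · intro h
      have hl := h l
      have hl' := h l'
      simp only [true_or, if_true, or_true, mem_singleton] at hl hl'
      exact ⟨by rw [hl, hl'], hl⟩
  have hsplit : ∑ v ∈ Finset.univ.filter (fun v : Fin L → J => v l = v l'), ∏ m, q (v m)
      = ∑ j : J, ∑ v ∈ Fintype.piFinset (t j), ∏ m, q (v m) := by
    rw [← Finset.sum_fiberwise_of_maps_to (g := fun v : Fin L → J => v l)
      (fun v _ => Finset.mem_univ (v l))]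
    exact Finset.sum_congr rfl fun j _ => by rw [hfib j]
  have hmarg : ∀ j : J, ∑ v ∈ Fintype.piFinset (t j), ∏ m, q (v m) = q j ^ 2 := by
    intro j
    rw [← Finset.prod_univ_sum]
    have h1 : ∀ m : Fin L, (∑ j' ∈ t j m, q j') = if m = l ∨ m = l' then q j else 1 := by
      intro m
      by_cases hm : m = l ∨ m = l' <;> simp [ht, hm, hq1]
    rw [Finset.prod_congr rfl fun m _ => h1 m, Finset.prod_ite, Finset.prod_const_one,
      mul_one, Finset.prod_const]
    have h2 : (Finset.univ.filter fun m : Fin L => m = l ∨ m = l') = {l, l'} := by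
      ext m; simp
    rw [h2, Finset.card_insert_of_notMem (by simpa using hne), Finset.card_singleton]
  rw [hsplit]
  calc ∑ j : J, ∑ v ∈ Fintype.piFinset (t j), ∏ m, q (v m)
      = ∑ j : J, q j ^ 2 := Finset.sum_congr rfl fun j _ => hmarg j
    _ ≤ ∑ j : J, C * q j := Finset.sum_le_sum fun j _ => by
        have := hq0 j; have := hqC j; nlinarith
    _ = C := by rw [← Finset.mul_sum, hq1, mul_one]

/-- Number of ordered pairs `(l, l')` with `l < l'` in `Fin L`. -/
lemma aux_card_lt_pairs (L : ℕ) :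
    ((Finset.univ : Finset (Fin L × Fin L)).filter fun e => e.1 < e.2).card = L.choose 2 := by
  rw [Finset.card_eq_sum_card_fiberwise (f := fun e : Fin L × Fin L => e.1)
    (t := Finset.univ) (fun e _ => Finset.mem_univ e.1)]
  have h : ∀ l : Fin L,
      (((Finset.univ : Finset (Fin L × Fin L)).filter fun e => e.1 < e.2).filter
        fun e => e.1 = l).card = (Finset.Ioi l).card := by
    intro l
    apply Finset.card_bij (fun e _ => e.2)
    · rintro e he
      simp only [mem_filter, mem_univ, true_and] at he
      simp only [Finset.mem_Ioi, ← he.2]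
      exact he.1
    · rintro e he e' he' h2
      simp only [mem_filter, mem_univ, true_and] at he he'
      ext
      · rw [he.2, he'.2]
      · exact congrArg Fin.val h2
    · intro b hb
      refine ⟨(l, b), ?_, rfl⟩
      simp only [mem_filter, mem_univ, true_and]
      exact ⟨Finset.mem_Ioi.mp hb, trivial⟩
  rw [Finset.sum_congr rfl fun l _ => h l]
  have h2 : ∀ l : Fin L, (Finset.Ioi l).card = L - 1 - (l : ℕ) := fun l => Fin.card_Ioi l
  rw [Finset.sum_congr rfl fun l _ => h2 l,
    Fin.sum_univ_eq_sum_range (fun i => L - 1 - i) L, Finset.sum_range_reflect (fun i => i) L]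
  have := Finset.sum_range_id_mul_two L
  rw [Nat.choose_two_right]
  omega

/-- Union bound: the total mass of non-injective tuples is at most
`binom(L,2)` times the maximal point mass. -/
lemma aux_noninj_sum_le {J : Type*} [Fintype J] [DecidableEq J] {L : ℕ}
    (q : J → ℝ) (hq0 : ∀ j, 0 ≤ q j) (hq1 : ∑ j, q j = 1)
    {C : ℝ} (hqC : ∀ j, q j ≤ C) :
    ∑ v ∈ Finset.univ.filter (fun v : Fin L → J => ¬ Function.Injective v),
      ∏ l, q (v l) ≤ (L.choose 2 : ℝ) * C := by
  set P : Finset (Fin L × Fin L) := Finset.univ.filter (fun e => e.1 < e.2) with hP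
  have hcover : ∀ v : Fin L → J, ¬ Function.Injective v → ∃ e ∈ P, v e.1 = v e.2 := by
    intro v hv
    rw [Function.not_injective_iff] at hv
    obtain ⟨a, b, hab, hne⟩ := hv
    rcases lt_or_gt_of_ne hne with h | h
    · exact ⟨(a, b), by simp [hP, h], hab⟩
    · exact ⟨(b, a), by simp [hP, h], hab.symm⟩
  have hprod_nonneg : ∀ v : Fin L → J, 0 ≤ ∏ l, q (v l) :=
    fun v => Finset.prod_nonneg fun l _ => hq0 (v l)
  calc ∑ v ∈ Finset.univ.filter (fun v : Fin L → J => ¬ Function.Injective v), ∏ l, q (v l)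
      ≤ ∑ v ∈ Finset.univ.filter (fun v : Fin L → J => ¬ Function.Injective v),
          ∑ e ∈ P.filter (fun e => v e.1 = v e.2), ∏ l, q (v l) := by
        apply Finset.sum_le_sum
        intro v hv
        obtain ⟨e, heP, heq⟩ := hcover v (by simpa using (Finset.mem_filter.mp hv).2)
        exact Finset.single_le_sum (f := fun _ => ∏ l, q (v l))
          (fun e _ => hprod_nonneg v) (Finset.mem_filter.mpr ⟨heP, heq⟩)
    _ = ∑ v ∈ Finset.univ.filter (fun v : Fin L → J => ¬ Function.Injective v),
          ∑ e ∈ P, if v e.1 = v e.2 then ∏ l, q (v l) else 0 := by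
        refine Finset.sum_congr rfl fun v _ => ?_
        rw [Finset.sum_filter]
    _ = ∑ e ∈ P, ∑ v ∈ Finset.univ.filter (fun v : Fin L → J => ¬ Function.Injective v),
          if v e.1 = v e.2 then ∏ l, q (v l) else 0 := Finset.sum_comm
    _ ≤ ∑ e ∈ P, ∑ v : Fin L → J, if v e.1 = v e.2 then ∏ l, q (v l) else 0 := by
        refine Finset.sum_le_sum fun e _ => ?_
        refine Finset.sum_le_sum_of_subset_of_nonneg (Finset.filter_subset _ _) ?_
        intro v _ _
        split
        · exact hprod_nonneg v
        · exact le_rfl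
    _ = ∑ e ∈ P, ∑ v ∈ Finset.univ.filter (fun v : Fin L → J => v e.1 = v e.2),
          ∏ l, q (v l) := by
        refine Finset.sum_congr rfl fun e _ => ?_
        rw [Finset.sum_filter]
    _ ≤ ∑ e ∈ P, C := by
        refine Finset.sum_le_sum fun e he => ?_
        have hlt : e.1 < e.2 := (Finset.mem_filter.mp he).2
        exact aux_pair_sum_le q hq0 hq1 hqC hlt.ne
    _ = (P.card : ℝ) * C := by rw [Finset.sum_const, nsmul_eq_mul]
    _ = (L.choose 2 : ℝ) * C := by rw [hP, aux_card_lt_pairs]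

/-- If `‖x j‖ ≤ K` for all `j`, and `π(β,·)` is the probability mass function
`π(β,j) = exp⟪β, x j⟫ / Σ_{j'} exp⟪β, x j'⟫` on `J`, then under the product
measure `π(β,·)^{⊗L}` on `J^L` (modeling `L` i.i.d. draws) the probability that
the coordinates are not pairwise distinct is at most
`binom(L,2) · exp(4K‖β‖) / |J|`. -/
theorem prob_not_injective_weights_le
    {p : ℕ} {J : Type*} [Fintype J] [Nonempty J] [DecidableEq J]
    (K : ℝ) (hK : 0 ≤ K) (L : ℕ) (hL : 1 ≤ L)
    (x : J → EuclideanSpace ℝ (Fin p)) (hx : ∀ j, ‖x j‖ ≤ K)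
    (β : EuclideanSpace ℝ (Fin p)) :
    ∑ v ∈ Finset.univ.filter (fun v : Fin L → J => ¬ Function.Injective v),
        ∏ l, (Real.exp ⟪β, x (v l)⟫ / ∑ j', Real.exp ⟪β, x j'⟫)
      ≤ (L.choose 2 : ℝ) * Real.exp (4 * K * ‖β‖) / (Fintype.card J : ℝ) := by
  set W : ℝ := ∑ j', Real.exp ⟪β, x j'⟫ with hW
  have hW0 : 0 < W := Finset.sum_pos (fun j _ => Real.exp_pos _) Finset.univ_nonempty
  set q : J → ℝ := fun j => Real.exp ⟪β, x j⟫ / W with hq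
  have hq0 : ∀ j, 0 ≤ q j := fun j => div_nonneg (Real.exp_pos _).le hW0.le
  have hq1 : ∑ j, q j = 1 := by
    rw [hq, ← Finset.sum_div, ← hW, div_self hW0.ne']
  have hn0 : 0 < (Fintype.card J : ℝ) := by
    exact_mod_cast Fintype.card_pos
  have hinner : ∀ j, |⟪β, x j⟫| ≤ K * ‖β‖ := by
    intro j
    refine (abs_real_inner_le_norm β (x j)).trans ?_
    calc ‖β‖ * ‖x j‖ ≤ ‖β‖ * K := by
          exact mul_le_mul_of_nonneg_left (hx j) (norm_nonneg β)
      _ = K * ‖β‖ := mul_comm _ _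
  have hKβ : 0 ≤ K * ‖β‖ := mul_nonneg hK (norm_nonneg β)
  have hqC : ∀ j, q j ≤ Real.exp (4 * K * ‖β‖) / (Fintype.card J : ℝ) := by
    intro j
    have hnum : Real.exp ⟪β, x j⟫ ≤ Real.exp (K * ‖β‖) :=
      Real.exp_le_exp.mpr ((abs_le.mp (hinner j)).2)
    have hden : (Fintype.card J : ℝ) * Real.exp (-(K * ‖β‖)) ≤ W := by
      have := Finset.card_nsmul_le_sum Finset.univ (fun j' => Real.exp ⟪β, x j'⟫)
        (Real.exp (-(K * ‖β‖))) (fun j' _ => Real.exp_le_exp.mpr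
          (neg_le.mp (neg_le.mpr (abs_le.mp (hinner j')).1)))
      simpa [nsmul_eq_mul, Finset.card_univ] using this
    have hdpos : 0 < (Fintype.card J : ℝ) * Real.exp (-(K * ‖β‖)) :=
      mul_pos hn0 (Real.exp_pos _)
    have h1 : q j ≤ Real.exp (K * ‖β‖) / ((Fintype.card J : ℝ) * Real.exp (-(K * ‖β‖))) :=
      div_le_div₀ (Real.exp_pos _).le hnum hdpos hden
    have h2 : Real.exp (K * ‖β‖) / ((Fintype.card J : ℝ) * Real.exp (-(K * ‖β‖)))
        = Real.exp (2 * (K * ‖β‖)) / (Fintype.card J : ℝ) := by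
      field_simp
      rw [← Real.exp_add]
      ring_nf
    have h3 : Real.exp (2 * (K * ‖β‖)) ≤ Real.exp (4 * K * ‖β‖) := by
      apply Real.exp_le_exp.mpr
      nlinarith
    refine h1.trans ?_
    rw [h2]
    gcongr
  have := aux_noninj_sum_le (L := L) q hq0 hq1 hqC
  rw [mul_div_assoc]
  exact this
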